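/- Let t₀ > 0, let ρ : (0, t₀] → ℝ be continuous, positive, and integrable on (0, t₀] (i.e. the improper integral ∫₀^{t₀} ρ(s) ds is finite), and let E : (0, t₀] → ℝ be differentiable with E(t) ≥ 0 and E'(t) ≥ −ρ(t) · E(t) for all t ∈ (0, t₀]. Then E(t) converges to a finite limit as t → 0⁺. -/

import Mathlib

open MeasureTheory

/-- If `E ≥ 0` satisfies `E' ≥ -ρ·E` on `(0, t₀]` with `ρ` continuous, positive and
integrable on `(0, t₀]`, then `E(t)` converges to a finite limit as `t → 0⁺`. -/
theorem exp_trick_convergence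
    (t₀ : ℝ) (ht₀ : 0 < t₀)
    (ρ E E' : ℝ → ℝ)
    (hρcont : ContinuousOn ρ (Set.Ioc 0 t₀))
    (hρpos : ∀ t ∈ Set.Ioc (0:ℝ) t₀, 0 < ρ t)
    (hρint : IntegrableOn ρ (Set.Ioc 0 t₀))
    (hE : ∀ t ∈ Set.Ioc (0:ℝ) t₀, HasDerivAt E (E' t) t)
    (hEnonneg : ∀ t ∈ Set.Ioc (0:ℝ) t₀, 0 ≤ E t)
    (hIneq : ∀ t ∈ Set.Ioc (0:ℝ) t₀, E' t ≥ -ρ t * E t) :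
    ∃ L : ℝ, Filter.Tendsto E (nhdsWithin 0 (Set.Ioi 0)) (nhds L) := by
  set P : ℝ → ℝ := fun x => ∫ s in Set.Ioc 0 x, ρ s
  have hIoosub : Set.Ioo (0:ℝ) t₀ ⊆ Set.Ioc 0 t₀ := Set.Ioo_subset_Ioc_self
  -- continuity at points of Ioo
  have hρca : ∀ t ∈ Set.Ioo (0:ℝ) t₀, ContinuousAt ρ t := by
    intro t ht
    exact (hρcont t (hIoosub ht)).continuousAt
      (mem_nhds_iff.2 ⟨Set.Ioo 0 t₀, hIoosub, isOpen_Ioo, ht⟩)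
  have hmeas := ContinuousAt.stronglyMeasurableAtFilter (μ := volume) isOpen_Ioo hρca
  -- derivative of the primitive
  have hP : ∀ t ∈ Set.Ioo (0:ℝ) t₀, HasDerivAt P (ρ t) t := by
    intro t ht
    have hii : IntervalIntegrable ρ volume 0 t := by
      rw [intervalIntegrable_iff_integrableOn_Ioc_of_le ht.1.le]
      exact hρint.mono_set (Set.Ioc_subset_Ioc_right ht.2.le)
    have hd := intervalIntegral.integral_hasDerivAt_right hii (hmeas t ht) (hρca t ht)
    refine hd.congr_of_eventuallyEq ?_
    filter_upwards [isOpen_Ioo.mem_nhds ht] with x hx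
    rw [intervalIntegral.integral_of_le hx.1.le]
  set G : ℝ → ℝ := fun x => E x * Real.exp (P x)
  have hG : ∀ t ∈ Set.Ioo (0:ℝ) t₀,
      HasDerivAt G ((E' t + ρ t * E t) * Real.exp (P t)) t := by
    intro t ht
    have : HasDerivAt G (E' t * Real.exp (P t) + E t * (Real.exp (P t) * ρ t)) t :=
      (hE t (hIoosub ht)).mul ((hP t ht).exp)
    convert this using 1
    ring
  have hGderiv : ∀ t ∈ Set.Ioo (0:ℝ) t₀, 0 ≤ (E' t + ρ t * E t) * Real.exp (P t) := by
    intro t ht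
    have h1 := hIneq t (hIoosub ht)
    have : 0 ≤ E' t + ρ t * E t := by linarith [h1]
    positivity
  have hGmono : MonotoneOn G (Set.Ioo 0 t₀) := by
    have hconv : Convex ℝ (Set.Ioo (0:ℝ) t₀) := convex_Ioo _ _
    refine monotoneOn_of_deriv_nonneg hconv ?_ ?_ ?_
    · intro t ht
      exact (hG t ht).continuousAt.continuousWithinAt
    · intro t ht
      rw [interior_Ioo] at ht
      exact (hG t ht).differentiableAt.differentiableWithinAt
    · intro t ht
      rw [interior_Ioo] at ht
      rw [(hG t ht).deriv]
      exact hGderiv t ht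
  have hGnonneg : ∀ x ∈ Set.Ioo (0:ℝ) t₀, 0 ≤ G x := by
    intro x hx
    have := hEnonneg x (hIoosub hx)
    positivity
  have hbdd : BddBelow (G '' Set.Ioo 0 t₀) := by
    refine ⟨0, ?_⟩
    rintro _ ⟨x, hx, rfl⟩
    exact hGnonneg x hx
  have hne : (Set.Ioo (0:ℝ) t₀).Nonempty := ⟨t₀ / 2, by constructor <;> linarith⟩
  have hGtend := hGmono.tendsto_nhdsWithin_Ioo_right hne hbdd
  -- P tends to 0 at 0⁺
  have hPint : IntegrableOn ρ (Set.Icc 0 t₀) := by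
    rw [integrableOn_Icc_iff_integrableOn_Ioc]
    exact hρint
  have hPcont : ContinuousOn P (Set.Icc 0 t₀) :=
    intervalIntegral.continuousOn_primitive hPint
  have hP0 : P 0 = 0 := by simp [P]
  have hPtend : Filter.Tendsto P (nhdsWithin 0 (Set.Ioi 0)) (nhds 0) := by
    have h1 : Filter.Tendsto P (nhdsWithin 0 (Set.Icc 0 t₀)) (nhds 0) := by
      have := hPcont 0 (Set.left_mem_Icc.2 ht₀.le)
      rwa [ContinuousWithinAt, hP0] at this
    refine h1.mono_left ?_
    rw [← nhdsWithin_Ioc_eq_nhdsGT ht₀]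
    exact nhdsWithin_mono _ Set.Ioc_subset_Icc_self
  have hexp : Filter.Tendsto (fun x => Real.exp (-P x)) (nhdsWithin 0 (Set.Ioi 0)) (nhds 1) := by
    have := (Real.continuous_exp.tendsto 0).comp (by simpa using hPtend.neg : Filter.Tendsto (fun x => -P x) (nhdsWithin 0 (Set.Ioi 0)) (nhds 0))
    simpa [Function.comp_def] using this
  refine ⟨sInf (G '' Set.Ioo 0 t₀), ?_⟩
  have hEG : E = fun x => G x * Real.exp (-P x) := by
    funext x
    simp only [G, mul_assoc, ← Real.exp_add]
    simp
  rw [hEG]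
  have := hGtend.mul hexp
  simpa using this
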